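/- Let α : I → ℝ³ be a spacelike curve with Bishop frame as above ((t,t)=1, (n₁,n₁)=−1, (n₂,n₂)=1). If 1 + a₁κ₁(s) ± a₁κ₂(s) = 0 for all s and some constant a₁, then P = α − a₁n₁ ∓ a₁n₂ is a fixed point and α lies on the light-cone C²(P), i.e., (α(s)−P, α(s)−P) = 0 for all s. -/

import Mathlib

noncomputable section

/-- The Minkowski bilinear form on ℝ³. -/
def mink (x y : Fin 3 → ℝ) : ℝ := x 0 * y 0 + x 1 * y 1 - x 2 * y 2

/-- If the normal development of a spacelike curve with a Bishop frame satisfies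
`1 + a₁κ₁ ± a₁κ₂ = 0`, then `P = α − a₁n₁ ∓ a₁n₂` is a fixed point and the curve lies on
the light-cone `C²(P)`. -/
theorem normal_development_line_implies_lightcone
    (α t n₁ n₂ : ℝ → Fin 3 → ℝ) (κ₁ κ₂ : ℝ → ℝ)
    (hαt : ∀ s, HasDerivAt α (t s) s)
    (htt : ∀ s, mink (t s) (t s) = 1)
    (hn₁n₁ : ∀ s, mink (n₁ s) (n₁ s) = -1)
    (hn₂n₂ : ∀ s, mink (n₂ s) (n₂ s) = 1)
    (htn₁ : ∀ s, mink (t s) (n₁ s) = 0)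
    (htn₂ : ∀ s, mink (t s) (n₂ s) = 0)
    (hn₁n₂ : ∀ s, mink (n₁ s) (n₂ s) = 0)
    (ht' : ∀ s, HasDerivAt t ((-(κ₁ s)) • n₁ s + κ₂ s • n₂ s) s)
    (hn₁' : ∀ s, HasDerivAt n₁ ((-(κ₁ s)) • t s) s)
    (hn₂' : ∀ s, HasDerivAt n₂ ((-(κ₂ s)) • t s) s)
    (a₁ σ : ℝ) (hσ : σ = 1 ∨ σ = -1)
    (hline : ∀ s, 1 + a₁ * κ₁ s + σ * a₁ * κ₂ s = 0) :
    (∀ s, α s - a₁ • n₁ s - (σ * a₁) • n₂ s = α 0 - a₁ • n₁ 0 - (σ * a₁) • n₂ 0) ∧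
    (∀ s, mink (α s - (α 0 - a₁ • n₁ 0 - (σ * a₁) • n₂ 0))
        (α s - (α 0 - a₁ • n₁ 0 - (σ * a₁) • n₂ 0)) = 0) := by
  set f : ℝ → Fin 3 → ℝ := fun s => α s - a₁ • n₁ s - (σ * a₁) • n₂ s with hf
  have hderiv : ∀ s, HasDerivAt f 0 s := by
    intro s
    have h := ((hαt s).sub ((hn₁' s).const_smul a₁)).sub ((hn₂' s).const_smul (σ * a₁))
    convert h using 1
    case e'_4 => rfl
    case e'_5 => rfl
    case e'_6 => rfl
    case e'_8 => rfl
    have := hline s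
    rw [smul_smul, smul_smul]
    funext i
    simp only [Pi.zero_apply, Pi.sub_apply, Pi.smul_apply, smul_eq_mul]
    linear_combination (-(t s i)) * this
  have hconst : ∀ s, f s = f 0 := by
    intro s
    have : f = fun _ => f 0 := by
      funext x
      have hd : ∀ y, deriv f y = 0 := fun y => (hderiv y).deriv
      have := is_const_of_deriv_eq_zero (fun y => (hderiv y).differentiableAt) hd x 0
      exact this
    exact congrFun this s
  refine ⟨hconst, fun s => ?_⟩
  have key : α s - (α 0 - a₁ • n₁ 0 - (σ * a₁) • n₂ 0) = a₁ • n₁ s + (σ * a₁) • n₂ s := by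
    have := hconst s
    simp only [hf] at this
    rw [← this]
    abel
  rw [key]
  have hσ2 : σ * σ = 1 := by rcases hσ with h | h <;> simp [h]
  have h1 := hn₁n₁ s
  have h2 := hn₂n₂ s
  have h3 := hn₁n₂ s
  simp only [mink, Pi.add_apply, Pi.smul_apply, smul_eq_mul] at *
  linear_combination a₁*a₁*h1 + σ*σ*a₁*a₁*h2 + 2*σ*a₁*a₁*h3 + a₁*a₁*hσ2
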